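/- The maximum of a₁ + Re(b₁) + a₂ over all triples of 2×2 positive semidefinite complex matrices N₁, N₂, N₃ with N₁ + N₂ + N₃ = I, where N₁ has diagonal entries a₁, a₁ and off-diagonal entry b₁, N₂ has diagonal entries a₂, c₂, and N₃ has diagonal entries c₂, a₂ (i.e., subject to the symmetry reductions a₁ = c₁, a₂ = c₃, a₃ = c₂), equals 4/3. Consequently F_{PBT_cl}(Φ⁺) = (1/4)(4/3 + 1) = 7/12. -/

import Mathlib

open scoped ComplexOrder

lemma quad2 (M : Matrix (Fin 2) (Fin 2) ℂ) (hM : M.PosSemidef) (u w : ℝ) :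
    0 ≤ u^2 * (M 0 0).re + 2*u*w*(M 0 1).re + w^2 * (M 1 1).re := by
  have herm : (M 1 0).re = (M 0 1).re := by
    have h := congrFun (congrFun hM.1 0) 1
    simp [Matrix.conjTranspose_apply] at h
    rw [← h]
    simp
  have h := hM.dotProduct_mulVec_nonneg ![(u:ℂ), (w:ℂ)]
  rw [Complex.le_def] at h
  have h1 := h.1
  simp [dotProduct, Matrix.mulVec, Fin.sum_univ_two, Complex.add_re,
    Complex.mul_re] at h1
  rw [herm] at h1
  nlinarith [h1]

lemma rank1psd (a b : ℂ) :
    (Matrix.of ![![star a * a, star a * b], ![star b * a, star b * b]]).PosSemidef := by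
  have h : (Matrix.of ![![a,b]] : Matrix (Fin 1) (Fin 2) ℂ).conjTranspose
      * Matrix.of ![![a,b]]
      = Matrix.of ![![star a * a, star a * b], ![star b * a, star b * b]] := by
    ext i j
    fin_cases i <;> fin_cases j <;>
      simp [Matrix.mul_apply, Fin.sum_univ_one, Matrix.conjTranspose_apply]
  rw [← h]
  exact Matrix.posSemidef_conjTranspose_mul_self _

theorem epr_pbtcl_povm_optimization :
    IsGreatest {v : ℝ | ∃ N1 N2 N3 : Matrix (Fin 2) (Fin 2) ℂ,
        N1.PosSemidef ∧ N2.PosSemidef ∧ N3.PosSemidef ∧ N1 + N2 + N3 = 1 ∧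
        N1 0 0 = N1 1 1 ∧ N2 0 0 = N3 1 1 ∧ N3 0 0 = N2 1 1 ∧
        v = (N1 0 0).re + (N1 0 1).re + (N2 0 0).re} (4 / 3) ∧
    (1 / 4 : ℝ) * (4 / 3 + 1) = 7 / 12 := by
  constructor
  · constructor
    · -- membership
      refine ⟨Matrix.of ![![star ((2:ℂ)/3) * (2/3), star ((2:ℂ)/3) * (2/3)],
                          ![star ((2:ℂ)/3) * (2/3), star ((2:ℂ)/3) * (2/3)]],
              Matrix.of ![![star ((2:ℂ)/3) * (2/3), star ((2:ℂ)/3) * (-1/3)],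
                          ![star ((-1:ℂ)/3) * (2/3), star ((-1:ℂ)/3) * (-1/3)]],
              Matrix.of ![![star ((-1:ℂ)/3) * (-1/3), star ((-1:ℂ)/3) * (2/3)],
                          ![star ((2:ℂ)/3) * (-1/3), star ((2:ℂ)/3) * (2/3)]],
              rank1psd (2/3) (2/3), rank1psd (2/3) (-1/3), rank1psd (-1/3) (2/3),
              ?_, ?_, ?_, ?_, ?_⟩
      · ext i j
        fin_cases i <;> fin_cases j <;>
          simp [Matrix.one_apply, Complex.ext_iff] <;> norm_num [Complex.ext_iff]
      · norm_num [Complex.ext_iff]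
      · norm_num [Complex.ext_iff]
      · norm_num [Complex.ext_iff]
      · norm_num [Complex.ext_iff]
    · -- upper bound
      rintro v ⟨N1, N2, N3, h1, h2, h3, hsum, e1, e2, e3, hv⟩
      have q1 := quad2 N1 h1 1 (-1)
      have q2 := quad2 N2 h2 1 2
      have q3 := quad2 N3 h3 2 1
      have s00 : (N1 0 0).re + (N2 0 0).re + (N3 0 0).re = 1 := by
        have := congrArg Complex.re (congrFun (congrFun hsum 0) 0)
        simpa [Matrix.one_apply] using this
      have s01 : (N1 0 1).re + (N2 0 1).re + (N3 0 1).re = 0 := by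
        have := congrArg Complex.re (congrFun (congrFun hsum 0) 1)
        simpa [Matrix.one_apply] using this
      have e1' : (N1 0 0).re = (N1 1 1).re := congrArg Complex.re e1
      have e2' : (N2 0 0).re = (N3 1 1).re := congrArg Complex.re e2
      have e3' : (N3 0 0).re = (N2 1 1).re := congrArg Complex.re e3
      rw [hv]
      nlinarith [q1, q2, q3, s00, s01, e1', e2', e3']
  · norm_num
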